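/- The Serre diagonal Δ on cellular chains of the n-cube I^n, defined on the top cell by Δ(e_1 ⊗ ⋯ ⊗ e_n) = Σ_{X ⊆ {1,…,n}} ± (face obtained by collapsing coordinates in X to 0) ⊗ (face obtained by collapsing coordinates not in X to 1), is coassociative: (Δ ⊗ id) ∘ Δ = (id ⊗ Δ) ∘ Δ. -/

import Mathlib

noncomputable section

namespace Stmt9

open TensorProduct

/-- A cell of the standard `n`-cube `I^n`: each coordinate is either collapsed
to `0` (`some false`), collapsed to `1` (`some true`), or free (`none`). -/
def Cell (n : ℕ) : Type := Fin n → Option Bool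

instance (n : ℕ) : DecidableEq (Cell n) := by
  unfold Cell; infer_instance

/-- The set of free coordinates of a cell. -/
def free {n : ℕ} (c : Cell n) : Finset (Fin n) :=
  @Finset.filter (Fin n) (fun i => c i = none) (fun _ => inferInstance) Finset.univ

/-- `ρ(X) = #{(i,j) ∈ X × X̄ : i < j}`, where `X̄` is the complement of `X`
inside the free coordinates. -/
def rho {n : ℕ} (c : Cell n) (X : Finset (Fin n)) : ℕ :=
  ((X ×ˢ (free c \ X)).filter fun p => p.1 < p.2).card

/-- The front face `c/X`: collapse the coordinates in `X` to `0`. -/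
def frontFace {n : ℕ} (c : Cell n) (X : Finset (Fin n)) : Cell n :=
  fun i => if i ∈ X then some false else c i

/-- The back face `c_{X̄}`: collapse the free coordinates not in `X` to `1`. -/
def backFace {n : ℕ} (c : Cell n) (X : Finset (Fin n)) : Cell n :=
  fun i => if i ∈ free c \ X then some true else c i

/-- Cellular chains of the `n`-cube. -/
def Chains (n : ℕ) : Type := Cell n →₀ ℤ

instance (n : ℕ) : AddCommGroup (Chains n) := by unfold Chains; infer_instance
instance (n : ℕ) : Module ℤ (Chains n) := by unfold Chains; infer_instance

/-- The Serre diagonal on a single cell: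
`Δ(c) = Σ_{X ⊆ free c} (−1)^{ρ(X)} (c/X) ⊗ (c_{X̄})`. -/
def serreGen (n : ℕ) (c : Cell n) : Chains n ⊗[ℤ] Chains n :=
  ∑ X ∈ (free c).powerset,
    ((-1 : ℤ) ^ rho c X) •
      ((Finsupp.single (frontFace c X) (1 : ℤ)) ⊗ₜ[ℤ] (Finsupp.single (backFace c X) (1 : ℤ)))

/-- The Serre diagonal on cellular chains of the `n`-cube, extended linearly. -/
def serre (n : ℕ) : Chains n →ₗ[ℤ] Chains n ⊗[ℤ] Chains n :=
  Finsupp.linearCombination ℤ (serreGen n)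

-- auxiliary
def cs {n : ℕ} (a : Cell n) : Chains n := Finsupp.single a (1 : ℤ)

lemma serreGen_eq (n : ℕ) (c : Cell n) : serreGen n c = ∑ X ∈ (free c).powerset,
    ((-1 : ℤ) ^ rho c X) • (cs (frontFace c X) ⊗ₜ[ℤ] cs (backFace c X)) := rfl

lemma free_frontFace {n : ℕ} (c : Cell n) (X : Finset (Fin n)) :
    free (frontFace c X) = free c \ X := by
  ext i
  simp only [free, Finset.mem_filter, Finset.mem_univ, true_and, Finset.mem_sdiff]
  simp only [frontFace]
  by_cases h : i ∈ X <;> simp [h]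

lemma free_backFace {n : ℕ} (c : Cell n) {X : Finset (Fin n)} (hX : X ⊆ free c) :
    free (backFace c X) = X := by
  ext i
  simp only [free, backFace, Finset.mem_filter, Finset.mem_univ, true_and, Finset.mem_sdiff]
  by_cases h : i ∈ X
  · have := hX h
    simp only [free, Finset.mem_filter, Finset.mem_univ, true_and] at this
    simp [h, this]
  · by_cases h2 : c i = none <;> simp [free, h, h2]

variable {n : ℕ} {c : Cell n} {X Y : Finset (Fin n)}

lemma front_front (c : Cell n) (X Y : Finset (Fin n)) :
    frontFace (frontFace c X) Y = frontFace c (X ∪ Y) := by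
  funext i
  simp only [frontFace, Finset.mem_union]
  by_cases h1 : i ∈ X <;> by_cases h2 : i ∈ Y <;> simp [h1, h2]

lemma back_front (hX : X ⊆ free c) (hY : Y ⊆ free c) (hd : Disjoint X Y) :
    backFace (frontFace c X) Y = frontFace (backFace c (X ∪ Y)) X := by
  funext i
  simp only [backFace, frontFace, free_frontFace, Finset.mem_sdiff, Finset.mem_union]
  by_cases h1 : i ∈ X
  · simp [h1, hd.forall_ne_finset h1]
  · by_cases h2 : i ∈ Y <;> by_cases h3 : i ∈ free c <;> simp [h1, h2, h3]

lemma back_back (hX : X ⊆ free c) (hY : Y ⊆ free c) (hd : Disjoint X Y) :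
    backFace (backFace c (X ∪ Y)) X = backFace c X := by
  funext i
  have hA : X ∪ Y ⊆ free c := Finset.union_subset hX hY
  simp only [backFace, free_backFace c hA, Finset.mem_sdiff, Finset.mem_union]
  by_cases h1 : i ∈ X
  · simp [h1]
  · by_cases h2 : i ∈ Y
    · simp [h1, h2, hY h2]
    · by_cases h3 : i ∈ free c <;> simp [h1, h2, h3]

def N (X Y : Finset (Fin n)) : ℕ := ((X ×ˢ Y).filter fun p => p.1 < p.2).card

lemma N_union_left (X Y T : Finset (Fin n)) (hd : Disjoint X Y) :
    N (X ∪ Y) T = N X T + N Y T := by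
  unfold N
  rw [Finset.union_product, Finset.filter_union, Finset.card_union_of_disjoint]
  exact Finset.disjoint_filter_filter
    (Finset.disjoint_product.mpr (Or.inl hd))

lemma N_union_right (X Y T : Finset (Fin n)) (hd : Disjoint Y T) :
    N X (Y ∪ T) = N X Y + N X T := by
  unfold N
  rw [Finset.product_union, Finset.filter_union, Finset.card_union_of_disjoint]
  exact Finset.disjoint_filter_filter
    (Finset.disjoint_product.mpr (Or.inr hd))

lemma sign_eq (hX : X ⊆ free c) (hY : Y ⊆ free c) (hd : Disjoint X Y) :
    rho c X + rho (frontFace c X) Y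
      = rho c (X ∪ Y) + rho (backFace c (X ∪ Y)) X := by
  have hA : X ∪ Y ⊆ free c := Finset.union_subset hX hY
  have e1 : rho c X = N X (free c \ X) := rfl
  have e2 : rho (frontFace c X) Y = N Y (free c \ (X ∪ Y)) := by
    unfold rho N
    rw [free_frontFace]
    have h : (free c \ X) \ Y = free c \ (X ∪ Y) := by
      ext i; simp only [Finset.mem_sdiff, Finset.mem_union]; tauto
    rw [h]
  have e3 : rho c (X ∪ Y) = N (X ∪ Y) (free c \ (X ∪ Y)) := rfl
  have e4 : rho (backFace c (X ∪ Y)) X = N X Y := by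
    unfold rho N
    rw [free_backFace c hA, Finset.union_sdiff_cancel_left hd]
  have e5 : free c \ X = Y ∪ (free c \ (X ∪ Y)) := by
    ext i
    simp only [Finset.mem_sdiff, Finset.mem_union]
    constructor
    · rintro ⟨h1, h2⟩
      by_cases h3 : i ∈ Y
      · exact Or.inl h3
      · exact Or.inr ⟨h1, by simp [h2, h3]⟩
    · rintro (h | ⟨h1, h2⟩)
      · exact ⟨hY h, fun hx => hd.forall_ne_finset hx h rfl⟩
      · exact ⟨h1, fun hx => h2 (Or.inl hx)⟩
  rw [e1, e2, e3, e4, e5]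
  have hdY : Disjoint Y (free c \ (X ∪ Y)) :=
    Finset.disjoint_left.mpr fun a ha hb => (Finset.mem_sdiff.mp hb).2 (Finset.mem_union_right _ ha)
  rw [N_union_right _ _ _ hdY, N_union_left _ _ _ hd]
  ring


lemma serre_single (n : ℕ) (a : Cell n) :
    serre n (Finsupp.single a (1 : ℤ)) = serreGen n a := by
  unfold serre
  erw [Finsupp.linearCombination_single, one_smul]

lemma serre_cs (n : ℕ) (a : Cell n) : serre n (cs a) = serreGen n a := serre_single n a

def serre2 (n : ℕ) : @LinearMap ℤ ℤ _ _ (RingHom.id ℤ) (Chains n) (Chains n ⊗[ℤ] Chains n) _ _ _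
    TensorProduct.instModule := serre n

lemma serre2_cs (n : ℕ) (a : Cell n) : serre2 n (cs a) = serreGen n a := serre_single n a

lemma serre2_smul_cs (n : ℕ) (k : ℤ) (a : Cell n) : serre2 n (k • cs a) =
    ∑ X ∈ (free a).powerset, (k * (-1 : ℤ) ^ rho a X) • (cs (frontFace a X) ⊗ₜ[ℤ] cs (backFace a X)) := by
  erw [LinearMap.map_smul, serre2_cs, serreGen_eq, Finset.smul_sum]
  exact Finset.sum_congr rfl fun X _ => (mul_smul _ _ _).symm

lemma map_serre2 (n : ℕ) (x : Chains n ⊗[ℤ] Chains n) :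
    (TensorProduct.assoc ℤ (Chains n) (Chains n) (Chains n))
        (TensorProduct.map (serre n) LinearMap.id x) =
      (TensorProduct.assoc ℤ (Chains n) (Chains n) (Chains n))
        (TensorProduct.map (serre2 n) LinearMap.id x) := rfl

lemma map_serre2' (n : ℕ) (x : Chains n ⊗[ℤ] Chains n) :
    TensorProduct.map LinearMap.id (serre n) x = TensorProduct.map LinearMap.id (serre2 n) x := rfl

lemma tmul_zsmul_aux {M N : Type*} [AddCommGroup M] [AddCommGroup N] (x : M) (k : ℤ) (y : N) :
    x ⊗ₜ[ℤ] (k • y) = k • (x ⊗ₜ[ℤ] y) := TensorProduct.tmul_smul k x y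

lemma key (n : ℕ) (c : Cell n) :
    (TensorProduct.assoc ℤ (Chains n) (Chains n) (Chains n))
        (TensorProduct.map (serre n) LinearMap.id (serreGen n c)) =
      TensorProduct.map LinearMap.id (serre n) (serreGen n c) := by
  rw [map_serre2, map_serre2']
  conv_lhs => rw [serreGen_eq]
  conv_rhs => rw [serreGen_eq]
  erw [map_sum, map_sum, map_sum]
  simp only [LinearMapClass.map_smul, TensorProduct.map_tmul, LinearMap.id_coe, id_eq,
    serre_cs, serre2_cs, serreGen_eq, TensorProduct.sum_tmul, TensorProduct.tmul_sum,
    TensorProduct.smul_tmul', TensorProduct.tmul_smul, map_sum, LinearMapClass.map_smul,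
    TensorProduct.assoc_tmul, Finset.smul_sum, smul_smul, serre2_smul_cs]
  simp only [← TensorProduct.smul_tmul', TensorProduct.tmul_smul, smul_smul]
  rw [Finset.sum_sigma', Finset.sum_sigma']
  refine Finset.sum_nbij' (fun p => ⟨p.1 ∪ p.2, p.1⟩) (fun p => ⟨p.2, p.1 \ p.2⟩)
    ?_ ?_ ?_ ?_ ?_
  · rintro ⟨X, Y⟩ hp
    simp only [Finset.mem_sigma, Finset.mem_powerset, free_frontFace] at hp
    obtain ⟨hX, hY⟩ := hp
    have hY' : Y ⊆ free c := hY.trans (Finset.sdiff_subset)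
    have hA : X ∪ Y ⊆ free c := Finset.union_subset hX hY'
    simp only [Finset.mem_sigma, Finset.mem_powerset, free_backFace c hA]
    exact ⟨hA, Finset.subset_union_left⟩
  · rintro ⟨A, B⟩ hp
    simp only [Finset.mem_sigma, Finset.mem_powerset] at hp
    obtain ⟨hA, hB⟩ := hp
    rw [free_backFace c hA] at hB
    simp only [Finset.mem_sigma, Finset.mem_powerset, free_frontFace]
    exact ⟨(hB.trans hA), Finset.sdiff_subset_sdiff hA (le_refl B)⟩
  · rintro ⟨X, Y⟩ hp
    simp only [Finset.mem_sigma, Finset.mem_powerset, free_frontFace] at hp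
    have hd : Disjoint X Y := Finset.disjoint_sdiff.mono_right hp.2
    simp only [Finset.union_sdiff_cancel_left hd]
  · rintro ⟨A, B⟩ hp
    simp only [Finset.mem_sigma, Finset.mem_powerset] at hp
    obtain ⟨hA, hB⟩ := hp
    rw [free_backFace c hA] at hB
    simp only [Finset.union_sdiff_of_subset hB]
  · rintro ⟨X, Y⟩ hp
    simp only [Finset.mem_sigma, Finset.mem_powerset, free_frontFace] at hp
    obtain ⟨hX, hY⟩ := hp
    have hY' : Y ⊆ free c := hY.trans (Finset.sdiff_subset)
    have hd : Disjoint X Y := Finset.disjoint_sdiff.mono_right hY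
    simp only [front_front, back_front hX hY' hd, back_back hX hY' hd, ← pow_add,
      sign_eq hX hY' hd, Nat.add_comm (rho c (X ∪ Y))]
    erw [tmul_zsmul_aux, smul_smul, ← pow_add, Nat.add_comm (rho c (X ∪ Y))]
    rfl


/-- The Serre diagonal is coassociative: `(Δ ⊗ id) ∘ Δ = (id ⊗ Δ) ∘ Δ`. -/
theorem serre_coassoc (n : ℕ) :
    (TensorProduct.assoc ℤ (Chains n) (Chains n) (Chains n)).toLinearMap ∘ₗ
        (TensorProduct.map (serre n) LinearMap.id) ∘ₗ serre n =
      (TensorProduct.map LinearMap.id (serre n)) ∘ₗ serre n := by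
  refine Finsupp.lhom_ext fun a b => ?_
  have h1 : serre n (Finsupp.single a b) = b • serreGen n a := by
    unfold serre; erw [Finsupp.linearCombination_single]
  erw [LinearMap.comp_apply, LinearMap.comp_apply, LinearMap.comp_apply]
  erw [h1]
  erw [map_smul, map_smul, map_smul, LinearEquiv.coe_coe, key]
  rfl

end Stmt9
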